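/- A rational function f on the variety V = {(p,q) ∈ ℂ³×ℂ³ : p·q = 0} which can be written as f = P₁/p₁ⁿ on {p₁ ≠ 0} and f = P₂/p₂ⁿ on {p₂ ≠ 0} and f = P₃/p₃ⁿ on {p₃ ≠ 0}, where each Pᵢ is a polynomial, coincides on V∖{p=0} with a polynomial function in p and q. -/

import Mathlib

open MvPolynomial

noncomputable def pqPoly : MvPolynomial (Fin 6) ℂ :=
  X 0 * X 3 + X 1 * X 4 + X 2 * X 5

namespace ExtendsToPoly

/-- A primitive linear polynomial over a domain is irreducible. -/
lemma irreducible_linear {R : Type*} [CommRing R] [IsDomain R] {a b : R} (ha : a ≠ 0)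
    (hco : ∀ d : R, d ∣ a → d ∣ b → IsUnit d) :
    Irreducible (Polynomial.C a * Polynomial.X + Polynomial.C b) := by
  set p : Polynomial R := Polynomial.C a * Polynomial.X + Polynomial.C b with hp
  have hdeg : p.natDegree = 1 := Polynomial.natDegree_linear ha
  have hc1 : p.coeff 1 = a := by simp [hp]
  have hc0 : p.coeff 0 = b := by simp [hp]
  have hpne : p ≠ 0 := fun h => by simp [h] at hdeg
  have key : ∀ w z : Polynomial R, p = w * z → w.natDegree = 0 → IsUnit w := by
    intro w z hwz hw
    obtain ⟨r, rfl⟩ : ∃ r, w = Polynomial.C r :=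
      ⟨w.coeff 0, Polynomial.eq_C_of_natDegree_eq_zero hw⟩
    have hdvd : ∀ k, r ∣ p.coeff k := by
      intro k
      rw [hwz, Polynomial.coeff_C_mul]
      exact dvd_mul_right _ _
    exact Polynomial.isUnit_C.mpr (hco r (hc1 ▸ hdvd 1) (hc0 ▸ hdvd 0))
  constructor
  · intro hu
    have := Polynomial.natDegree_eq_zero_of_isUnit hu
    omega
  · intro u v huv
    have hu0 : u ≠ 0 := fun h => hpne (by simp [huv, h])
    have hv0 : v ≠ 0 := fun h => hpne (by simp [huv, h])
    have hsum : u.natDegree + v.natDegree = 1 := by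
      rw [← Polynomial.natDegree_mul hu0 hv0, ← huv, hdeg]
    rcases Nat.eq_zero_or_pos u.natDegree with h | h
    · exact Or.inl (key u v huv h)
    · exact Or.inr (key v u (by rw [huv, mul_comm]) (by omega))

/-- A polynomial that vanishes at a point does not divide one that doesn't. -/
lemma not_dvd_of_eval {σ : Type*} {g a : MvPolynomial σ ℂ} (v : σ → ℂ)
    (hg : eval v g = 0) (ha : eval v a ≠ 0) : ¬ g ∣ a := by
  rintro ⟨c, rfl⟩
  exact ha (by rw [map_mul, hg, zero_mul])

/-- Transfer primality along a ring isomorphism. -/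
lemma prime_map {R S : Type*} [CommRing R] [CommRing S] (e : R ≃+* S) {p : R}
    (h : Prime (e p)) : Prime p :=
  (MulEquiv.prime_iff e).mp h

/-- Each variable is prime in a multivariate polynomial ring over ℂ. -/
lemma prime_X_mv {m : ℕ} (i : Fin (m + 1)) :
    Prime (X i : MvPolynomial (Fin (m + 1)) ℂ) := by
  apply prime_map (renameEquiv ℂ (Equiv.swap i 0)).toRingEquiv
  have h1 : (renameEquiv ℂ (Equiv.swap i 0)).toRingEquiv (X i)
      = (X 0 : MvPolynomial (Fin (m + 1)) ℂ) := by
    show rename (Equiv.swap i 0) (X i) = X 0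
    rw [rename_X, Equiv.swap_apply_left]
  rw [h1]
  apply prime_map (finSuccEquiv ℂ m).toRingEquiv
  have h2 : (finSuccEquiv ℂ m).toRingEquiv (X 0)
      = (Polynomial.X : Polynomial (MvPolynomial (Fin m) ℂ)) := finSuccEquiv_X_zero
  rw [h2]
  exact Polynomial.prime_X

/-- If `F` becomes a primitive linear polynomial after separating the first
variable, then `F` is prime. -/
lemma prime_of_linear {m : ℕ} {F : MvPolynomial (Fin (m + 1)) ℂ}
    {a b : MvPolynomial (Fin m) ℂ}
    (hF : finSuccEquiv ℂ m F = Polynomial.C a * Polynomial.X + Polynomial.C b)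
    (ha : a ≠ 0) (hco : ∀ d, d ∣ a → d ∣ b → IsUnit d) : Prime F := by
  have hirr := irreducible_linear ha hco
  have hpr : Prime (Polynomial.C a * Polynomial.X + Polynomial.C b) :=
    UniqueFactorizationMonoid.irreducible_iff_prime.mp hirr
  apply prime_map (finSuccEquiv ℂ m).toRingEquiv
  have : (finSuccEquiv ℂ m).toRingEquiv F = finSuccEquiv ℂ m F := rfl
  rw [this, hF]
  exact hpr

/-- Coprimality from a prime not dividing the other part. -/
lemma coprime_of_prime_not_dvd {R : Type*} [CommRing R] [IsDomain R] {a b : R}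
    (ha : Prime a) (hab : ¬ a ∣ b) : ∀ d : R, d ∣ a → d ∣ b → IsUnit d := by
  intro d hda hdb
  obtain ⟨e, he⟩ := hda
  rcases ha.irreducible.isUnit_or_isUnit he with h | h
  · exact h
  · exfalso
    apply hab
    obtain ⟨u, rfl⟩ := h
    calc a ∣ d := ⟨(u⁻¹ : Rˣ), by rw [he, Units.mul_inv_cancel_right]⟩
    _ ∣ b := hdb

section Quadrics

/-- The image of `pqPoly` under separating out the variable `X 0`. -/
lemma pq_image : finSuccEquiv ℂ 5 pqPoly
    = Polynomial.C (X 2) * Polynomial.X + Polynomial.C (X 0 * X 3 + X 1 * X 4) := by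
  have h1 : (1 : Fin 6) = Fin.succ 0 := rfl
  have h2 : (2 : Fin 6) = Fin.succ 1 := rfl
  have h3 : (3 : Fin 6) = Fin.succ 2 := rfl
  have h4 : (4 : Fin 6) = Fin.succ 3 := rfl
  have h5 : (5 : Fin 6) = Fin.succ 4 := rfl
  rw [pqPoly, h1, h2, h3, h4, h5]
  simp only [map_add, map_mul, finSuccEquiv_X_zero, finSuccEquiv_X_succ]
  ring

lemma prime_pq : Prime pqPoly := by
  apply prime_of_linear pq_image (X_ne_zero 2)
  apply coprime_of_prime_not_dvd (prime_X_mv 2)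
  rintro ⟨c, hc⟩
  have := congrArg (eval ![1, 0, 0, 1, 0]) hc
  simp only [map_add, map_mul, eval_X] at this
  simp at this

/-- The quadric `q₂p₂ + q₃p₃`. -/
noncomputable def hQ : MvPolynomial (Fin 6) ℂ := X 1 * X 4 + X 2 * X 5

lemma prime_hQ : Prime hQ := by
  apply prime_map (renameEquiv ℂ (Equiv.swap (0 : Fin 6) 1)).toRingEquiv
  have himg : (renameEquiv ℂ (Equiv.swap (0 : Fin 6) 1)).toRingEquiv hQ
      = (X 0 * X 4 + X 2 * X 5 : MvPolynomial (Fin 6) ℂ) := by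
    show rename (Equiv.swap (0 : Fin 6) 1) hQ = _
    have e1 : Equiv.swap (0 : Fin 6) 1 1 = 0 := Equiv.swap_apply_right 0 1
    have e2 : Equiv.swap (0 : Fin 6) 1 4 = 4 :=
      Equiv.swap_apply_of_ne_of_ne (by decide) (by decide)
    have e3 : Equiv.swap (0 : Fin 6) 1 2 = 2 :=
      Equiv.swap_apply_of_ne_of_ne (by decide) (by decide)
    have e4 : Equiv.swap (0 : Fin 6) 1 5 = 5 :=
      Equiv.swap_apply_of_ne_of_ne (by decide) (by decide)
    simp only [hQ, map_add, map_mul, rename_X, e1, e2, e3, e4]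
  rw [himg]
  have himg2 : finSuccEquiv ℂ 5 (X 0 * X 4 + X 2 * X 5 : MvPolynomial (Fin 6) ℂ)
      = Polynomial.C (X 3) * Polynomial.X + Polynomial.C (X 1 * X 4) := by
    have h2 : (2 : Fin 6) = Fin.succ 1 := rfl
    have h4 : (4 : Fin 6) = Fin.succ 3 := rfl
    have h5 : (5 : Fin 6) = Fin.succ 4 := rfl
    rw [h2, h4, h5]
    simp only [map_add, map_mul, finSuccEquiv_X_zero, finSuccEquiv_X_succ]
    ring
  apply prime_of_linear himg2 (X_ne_zero 3)
  apply coprime_of_prime_not_dvd (prime_X_mv 3)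
  rintro ⟨c, hc⟩
  have := congrArg (eval ![0, 1, 0, 0, 1]) hc
  simp only [map_add, map_mul, eval_X] at this
  simp at this

lemma span_pair_eq :
    Ideal.span ({X 0, pqPoly} : Set (MvPolynomial (Fin 6) ℂ)) = Ideal.span {X 0, hQ} := by
  apply le_antisymm <;> rw [Ideal.span_le] <;> intro x hx <;>
    simp only [Set.mem_insert_iff, Set.mem_singleton_iff] at hx <;>
    rcases hx with rfl | rfl
  · exact Ideal.subset_span (by simp)
  · exact Ideal.mem_span_pair.mpr ⟨X 3, 1, by rw [pqPoly, hQ]; ring⟩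
  · exact Ideal.subset_span (by simp)
  · exact Ideal.mem_span_pair.mpr ⟨-X 3, 1, by rw [pqPoly, hQ]; ring⟩

/-- Substitution sending `X 0` to `0`. -/
noncomputable def kap : MvPolynomial (Fin 6) ℂ →+* MvPolynomial (Fin 6) ℂ :=
  (aeval (fun i : Fin 6 => if i = 0 then 0 else X i)).toRingHom

lemma kap_X0 : kap (X 0) = 0 := by simp [kap]

lemma kap_hQ : kap hQ = hQ := by
  have k1 : kap (X 1) = X 1 := by simp [kap]
  have k2 : kap (X 2) = X 2 := by simp [kap]
  have k4 : kap (X 4) = X 4 := by simp [kap]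
  have k5 : kap (X 5) = X 5 := by simp [kap]
  simp only [hQ, map_add, map_mul, k1, k2, k4, k5]

lemma X0_dvd_sub_kap (F : MvPolynomial (Fin 6) ℂ) : (X 0 : MvPolynomial (Fin 6) ℂ) ∣ F - kap F := by
  induction F using MvPolynomial.induction_on with
  | C a =>
      have : kap (C a) = C a := by simp [kap]
      rw [this, sub_self]
      exact dvd_zero _
  | add p q hp hq =>
      rw [map_add]
      have h : p + q - (kap p + kap q) = (p - kap p) + (q - kap q) := by ring
      rw [h]
      exact dvd_add hp hq
  | mul_X p i hp =>
      rw [map_mul]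
      by_cases hi : i = 0
      · subst hi
        rw [kap_X0, mul_zero, sub_zero]
        exact dvd_mul_left _ _
      · have hXi : kap (X i) = X i := by simp [kap, hi]
        rw [hXi]
        have h : p * X i - kap p * X i = (p - kap p) * X i := by ring
        rw [h]
        exact hp.mul_right _

lemma prime_span_pair :
    (Ideal.span ({X 0, pqPoly} : Set (MvPolynomial (Fin 6) ℂ))).IsPrime := by
  rw [span_pair_eq]
  haveI hQp : (Ideal.span ({hQ} : Set (MvPolynomial (Fin 6) ℂ))).IsPrime :=
    (Ideal.span_singleton_prime prime_hQ.ne_zero).mpr prime_hQ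
  have hker : Ideal.span ({X 0, hQ} : Set (MvPolynomial (Fin 6) ℂ))
      = RingHom.ker ((Ideal.Quotient.mk (Ideal.span {hQ})).comp kap) := by
    apply le_antisymm
    · rw [Ideal.span_le]
      intro x hx
      simp only [Set.mem_insert_iff, Set.mem_singleton_iff] at hx
      rcases hx with rfl | rfl
      · show (Ideal.Quotient.mk (Ideal.span {hQ})) (kap (X 0)) = 0
        rw [kap_X0, map_zero]
      · show (Ideal.Quotient.mk (Ideal.span {hQ})) (kap hQ) = 0
        rw [kap_hQ, Ideal.Quotient.eq_zero_iff_mem]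
        exact Ideal.subset_span rfl
    · intro F hF
      have hmem : kap F ∈ Ideal.span ({hQ} : Set (MvPolynomial (Fin 6) ℂ)) := by
        rwa [RingHom.mem_ker, RingHom.comp_apply, Ideal.Quotient.eq_zero_iff_mem] at hF
      obtain ⟨H, hH⟩ := Ideal.mem_span_singleton.mp hmem
      obtain ⟨S, hS⟩ := X0_dvd_sub_kap F
      exact Ideal.mem_span_pair.mpr ⟨S, H, by linear_combination -hS - hH⟩
  rw [hker]
  exact RingHom.ker_isPrime _

end Quadrics

end ExtendsToPoly

set_option maxHeartbeats 1000000 in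
/-- A function on V = {p·q = 0} given by Pᵢ/pᵢⁿ on each open set {pᵢ ≠ 0}
coincides with a polynomial on V ∖ {p = 0}.  Points of ℂ⁶ are `v : Fin 6 → ℂ`
with p = (v 0, v 1, v 2) and q = (v 3, v 4, v 5). -/
theorem extends_to_polynomial (f : (Fin 6 → ℂ) → ℂ) (n : ℕ)
    (P₁ P₂ P₃ : MvPolynomial (Fin 6) ℂ)
    (h1 : ∀ v : Fin 6 → ℂ, eval v pqPoly = 0 → v 0 ≠ 0 → f v = eval v P₁ / (v 0) ^ n)
    (h2 : ∀ v : Fin 6 → ℂ, eval v pqPoly = 0 → v 1 ≠ 0 → f v = eval v P₂ / (v 1) ^ n)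
    (h3 : ∀ v : Fin 6 → ℂ, eval v pqPoly = 0 → v 2 ≠ 0 → f v = eval v P₃ / (v 2) ^ n) :
    ∃ P : MvPolynomial (Fin 6) ℂ,
      ∀ v : Fin 6 → ℂ, eval v pqPoly = 0 → (v 0 ≠ 0 ∨ v 1 ≠ 0 ∨ v 2 ≠ 0) →
        f v = eval v P := by
  classical
  open ExtendsToPoly in
  have hgprime : Prime pqPoly := prime_pq
  have hIprime : (Ideal.span ({pqPoly} : Set (MvPolynomial (Fin 6) ℂ))).IsPrime :=
    (Ideal.span_singleton_prime hgprime.ne_zero).mpr hgprime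
  haveI := hIprime
  set I : Ideal (MvPolynomial (Fin 6) ℂ) := Ideal.span {pqPoly} with hI
  let mkI : MvPolynomial (Fin 6) ℂ →+* MvPolynomial (Fin 6) ℂ ⧸ I := Ideal.Quotient.mk I
  -- pqPoly does not divide X 0, X 1, X 2
  have hg0 : eval ![(1:ℂ),0,0,0,0,0] pqPoly = 0 := by
    simp only [pqPoly, map_add, map_mul, eval_X]; simp
  have hg1 : eval ![(0:ℂ),1,0,0,0,0] pqPoly = 0 := by
    simp only [pqPoly, map_add, map_mul, eval_X]; simp
  have hg2 : eval ![(0:ℂ),0,1,0,0,0] pqPoly = 0 := by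
    have e2 : (![(0:ℂ),0,1,0,0,0]) 2 = 1 := rfl
    have e5 : (![(0:ℂ),0,1,0,0,0]) 5 = 0 := rfl
    simp only [pqPoly, map_add, map_mul, eval_X, e2, e5]
    norm_num
  have hn0 : ¬ pqPoly ∣ (X 0 : MvPolynomial (Fin 6) ℂ) :=
    ExtendsToPoly.not_dvd_of_eval ![(1:ℂ),0,0,0,0,0] hg0 (by norm_num)
  have hn1 : ¬ pqPoly ∣ (X 1 : MvPolynomial (Fin 6) ℂ) :=
    ExtendsToPoly.not_dvd_of_eval ![(0:ℂ),1,0,0,0,0] hg1 (by norm_num)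
  have hn2 : ¬ pqPoly ∣ (X 2 : MvPolynomial (Fin 6) ℂ) :=
    ExtendsToPoly.not_dvd_of_eval ![(0:ℂ),0,1,0,0,0] hg2 (by simp)
  -- the cross relations
  have key : ∀ (j : Fin 6) (Pj : MvPolynomial (Fin 6) ℂ), (¬ pqPoly ∣ (X j : MvPolynomial (Fin 6) ℂ)) →
      (∀ v : Fin 6 → ℂ, eval v pqPoly = 0 → v j ≠ 0 → f v = eval v Pj / (v j) ^ n) →
      pqPoly ∣ X j ^ n * P₁ - X 0 ^ n * Pj := by
    intro j Pj hnj hj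
    have hmem : (X 0 * X j) * (X j ^ n * P₁ - X 0 ^ n * Pj) ∈
        vanishingIdeal ℂ (zeroLocus ℂ I) := by
      intro v hv
      show eval v _ = 0
      have hgv : eval v pqPoly = 0 := hv pqPoly (Ideal.subset_span rfl)
      by_cases h0 : v 0 = 0
      · simp [h0]
      by_cases hjv : v j = 0
      · simp [hjv]
      have e1 := h1 v hgv h0
      have e2 := hj v hgv hjv
      have heq : eval v P₁ / (v 0) ^ n = eval v Pj / (v j) ^ n := by rw [← e1, ← e2]
      rw [div_eq_div_iff (pow_ne_zero _ h0) (pow_ne_zero _ hjv)] at heq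
      simp only [map_mul, map_sub, map_pow, eval_X]
      have : v j ^ n * eval v P₁ - v 0 ^ n * eval v Pj = 0 := by linear_combination heq
      rw [this, mul_zero]
    rw [vanishingIdeal_zeroLocus_eq_radical, hIprime.radical] at hmem
    have hdvd : pqPoly ∣ (X 0 * X j) * (X j ^ n * P₁ - X 0 ^ n * Pj) :=
      Ideal.mem_span_singleton.mp hmem
    rcases hgprime.dvd_or_dvd hdvd with h | h
    · rcases hgprime.dvd_or_dvd h with h' | h'
      · exact absurd h' hn0
      · exact absurd h' hnj
    · exact h
  have key1 := key 1 P₂ hn1 h2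
  have key2 := key 2 P₃ hn2 h3
  -- move to the quotient ring
  have relation : ∀ (j : Fin 6) (Pj : MvPolynomial (Fin 6) ℂ),
      pqPoly ∣ X j ^ n * P₁ - X 0 ^ n * Pj →
      mkI (X j) ^ n * mkI P₁ = mkI (X 0) ^ n * mkI Pj := by
    intro j Pj hd
    have h0 : mkI (X j ^ n * P₁ - X 0 ^ n * Pj) = 0 :=
      Ideal.Quotient.eq_zero_iff_mem.mpr (Ideal.mem_span_singleton.mpr hd)
    rw [map_sub, map_mul, map_mul, map_pow, map_pow, sub_eq_zero] at h0
    exact h0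
  have rel1 := relation 1 P₂ key1
  have rel2 := relation 2 P₃ key2
  -- mkI (X 0) is prime and nonzero
  have ha0 : mkI (X 0) ≠ 0 := by
    intro h
    exact hn0 (Ideal.mem_span_singleton.mp (Ideal.Quotient.eq_zero_iff_mem.mp h))
  have hprime_a : Prime (mkI (X 0)) := by
    haveI hJ : (Ideal.span ({X 0, pqPoly} : Set (MvPolynomial (Fin 6) ℂ))).IsPrime :=
      ExtendsToPoly.prime_span_pair
    have hkle : RingHom.ker mkI ≤ Ideal.span ({X 0, pqPoly} : Set (MvPolynomial (Fin 6) ℂ)) := by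
      rw [Ideal.mk_ker]
      exact Ideal.span_mono (by simp)
    have hmap := Ideal.map_isPrime_of_surjective Ideal.Quotient.mk_surjective hkle
      (I := Ideal.span ({X 0, pqPoly} : Set (MvPolynomial (Fin 6) ℂ)))
    have hmkg : mkI pqPoly = 0 := Ideal.Quotient.eq_zero_iff_mem.mpr (Ideal.subset_span rfl)
    have himage : Ideal.map mkI (Ideal.span ({X 0, pqPoly} : Set (MvPolynomial (Fin 6) ℂ)))
        = Ideal.span {mkI (X 0)} := by
      rw [Ideal.map_span, Set.image_insert_eq, Set.image_singleton, hmkg]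
      apply le_antisymm
      · rw [Ideal.span_le]
        intro x hx
        simp only [Set.mem_insert_iff, Set.mem_singleton_iff] at hx
        rcases hx with rfl | rfl
        · exact Ideal.subset_span rfl
        · exact Submodule.zero_mem _
      · exact Ideal.span_mono (by simp)
    rw [himage] at hmap
    exact (Ideal.span_singleton_prime ha0).mp hmap
  -- mkI (X 0) does not divide mkI (X 1), mkI (X 2)
  have hnd : ∀ (j : Fin 6) (w : Fin 6 → ℂ), eval w pqPoly = 0 → w 0 = 0 → w j ≠ 0 →
      ¬ mkI (X 0) ∣ mkI (X j) := by
    rintro j w hw hw0 hwj ⟨t, ht⟩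
    obtain ⟨T, rfl⟩ := Ideal.Quotient.mk_surjective t
    have : X j - X 0 * T ∈ I := by
      rw [← Ideal.Quotient.eq_zero_iff_mem, map_sub, map_mul, ← ht, sub_self]
    obtain ⟨c, hc⟩ := Ideal.mem_span_singleton.mp this
    have := congrArg (eval w) hc
    simp only [map_sub, map_mul, eval_X] at this
    rw [hw0, hw, zero_mul, zero_mul] at this
    exact hwj (by linear_combination this)
  have hb1 : ¬ mkI (X 0) ∣ mkI (X 1) :=
    hnd 1 ![(0:ℂ),1,0,0,0,0] hg1 (by norm_num) (by simp)
  have hb2 : ¬ mkI (X 0) ∣ mkI (X 2) :=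
    hnd 2 ![(0:ℂ),0,1,0,0,0] hg2 (by norm_num) (by simp)
  -- divide
  have hdvd1 : mkI (X 0) ^ n ∣ mkI P₁ := by
    exact hprime_a.pow_dvd_of_dvd_mul_left n
      (fun hd => hb1 (hprime_a.dvd_of_dvd_pow hd))
      (show mkI (X 0) ^ n ∣ mkI (X 1) ^ n * mkI P₁ from ⟨mkI P₂, rel1⟩)
  obtain ⟨Qb, hQb⟩ := hdvd1
  obtain ⟨P, hP⟩ := Ideal.Quotient.mk_surjective Qb
  have hQb' : mkI P₁ = mkI (X 0) ^ n * mkI P := by rw [hP]; exact hQb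
  refine ⟨P, ?_⟩
  have hane : mkI (X 0) ^ n ≠ 0 := pow_ne_zero _ ha0
  -- the three congruences
  have congr1 : pqPoly ∣ X 0 ^ n * P - P₁ := by
    apply Ideal.mem_span_singleton.mp
    rw [← Ideal.Quotient.eq_zero_iff_mem]
    show mkI _ = 0
    rw [map_sub, map_mul, map_pow, sub_eq_zero]
    exact hQb'.symm
  have congrj : ∀ (j : Fin 6) (Pj : MvPolynomial (Fin 6) ℂ),
      mkI (X j) ^ n * mkI P₁ = mkI (X 0) ^ n * mkI Pj →
      pqPoly ∣ X j ^ n * P - Pj := by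
    intro j Pj hrel
    have hz : mkI (X 0) ^ n * (mkI (X j) ^ n * mkI P - mkI Pj) = 0 := by
      linear_combination hrel - (mkI (X j)) ^ n * hQb'
    have heq : mkI (X j) ^ n * mkI P - mkI Pj = 0 :=
      (mul_eq_zero.mp hz).resolve_left hane
    apply Ideal.mem_span_singleton.mp
    rw [← Ideal.Quotient.eq_zero_iff_mem]
    show mkI _ = 0
    rw [map_sub, map_mul, map_pow]
    exact heq
  have congr2 := congrj 1 P₂ rel1
  have congr3 := congrj 2 P₃ rel2
  -- conclude pointwise
  have final : ∀ (j : Fin 6) (Pj : MvPolynomial (Fin 6) ℂ),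
      pqPoly ∣ X j ^ n * P - Pj →
      (∀ v : Fin 6 → ℂ, eval v pqPoly = 0 → v j ≠ 0 → f v = eval v Pj / (v j) ^ n) →
      ∀ v : Fin 6 → ℂ, eval v pqPoly = 0 → v j ≠ 0 → f v = eval v P := by
    rintro j Pj ⟨c, hc⟩ hj v hgv hjv
    have := congrArg (eval v) hc
    simp only [map_sub, map_mul, map_pow, eval_X] at this
    rw [hgv, zero_mul] at this
    rw [hj v hgv hjv, div_eq_iff (pow_ne_zero _ hjv)]
    linear_combination -this
  intro v hgv hv
  rcases hv with h0 | h1v | h2v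
  · exact final 0 P₁ congr1 h1 v hgv h0
  · exact final 1 P₂ congr2 h2 v hgv h1v
  · exact final 2 P₃ congr3 h3 v hgv h2v
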